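/- arXiv:1612.07591 — 4 statements merged into one kernel-verified Lean document; each statement's English description precedes it below -/
import Mathlib

section
/- J(x) = (1-x)·H(x) + x·H(xq), where J(x) = Σ_{n≥0} (-x)^n q^{C(n,2)} / ((q;q)_n (xq;q)_n) and H(x) = Σ_{n≥0} (-x)^n q^{C(n,2)} / ((q;q)_n (x;q)_n), as formal power series in x over the field of rational functions in q (or as an identity of formal power series in x and q). -/
open PowerSeries

noncomputable section
namespace FC

/-- The field `ℚ(q)` of rational functions in `q`. -/
abbrev K : Type := RatFunc ℚ

/-- The variable `q`. -/
def q : K := RatFunc.X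

/-- The q-Pochhammer symbol `(a; q)_n = ∏_{i=0}^{n-1} (1 - a q^i)`. -/
def poch (a : K) (n : ℕ) : K := ∏ i ∈ Finset.range n, (1 - a * q ^ i)

/-- The power series `(x q^s; q)_n = ∏_{i=0}^{n-1} (1 - q^{s+i} x)` in the variable `x`. -/
def pochX (s n : ℕ) : PowerSeries K :=
  ∏ i ∈ Finset.range n, (1 - PowerSeries.C (q ^ (s + i)) * PowerSeries.X)

/-- `J(x) = Σ_{n≥0} (-x)^n q^{C(n,2)} / ((q;q)_n (xq;q)_n)`, defined coefficientwise:
the coefficient of `x^N` is `Σ_{n=0}^{N} (-1)^n q^{C(n,2)}/(q;q)_n · [x^{N-n}] (xq;q)_n⁻¹`. -/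
def J : PowerSeries K :=
  PowerSeries.mk fun N => ∑ n ∈ Finset.range (N + 1),
    ((-1 : K) ^ n * q ^ n.choose 2 / poch q n) * PowerSeries.coeff (N - n) (pochX 1 n)⁻¹

/-- `H(x) = Σ_{n≥0} (-x)^n q^{C(n,2)} / ((q;q)_n (x;q)_n)`. -/
def H : PowerSeries K :=
  PowerSeries.mk fun N => ∑ n ∈ Finset.range (N + 1),
    ((-1 : K) ^ n * q ^ n.choose 2 / poch q n) * PowerSeries.coeff (N - n) (pochX 0 n)⁻¹

/-! ### Auxiliary definitions and lemmas -/

/-- The coefficient `(-1)^n q^{C(n,2)} / (q;q)_n`. -/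
def c (n : ℕ) : K := (-1 : K) ^ n * q ^ n.choose 2 / poch q n

/-- The `n`-th term of the series, as a power series. -/
def T (s n : ℕ) : PowerSeries K :=
  PowerSeries.C (c n) * (PowerSeries.X ^ n * (pochX s n)⁻¹)

lemma constCoeff_pochX (s n : ℕ) : constantCoeff (pochX s n) = 1 := by
  rw [pochX, map_prod]; simp

lemma pochX_ne (s n : ℕ) : pochX s n ≠ 0 := by
  intro h
  have := constCoeff_pochX s n
  rw [h, map_zero] at this
  exact one_ne_zero this.symm

lemma pochX_inv_mul (s n : ℕ) : (pochX s n)⁻¹ * pochX s n = 1 :=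
  PowerSeries.inv_mul_cancel (pochX s n) (by simp [constCoeff_pochX])

/-- The key identity: `1/(xq;q)_n = (1-x)/(x;q)_n + q^n x/(xq;q)_n`. -/
lemma key (n : ℕ) : (pochX 1 n)⁻¹ =
    (1 - PowerSeries.X) * (pochX 0 n)⁻¹
      + PowerSeries.C (q ^ n) * PowerSeries.X * (pochX 1 n)⁻¹ := by
  cases n with
  | zero => simp [pochX]
  | succ m =>
    have h0 : pochX 0 (m + 1) = (1 - PowerSeries.X) * pochX 1 m := by
      rw [pochX, Finset.prod_range_succ']
      simp only [pow_zero, map_one, one_mul, zero_add]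
      rw [mul_comm, pochX]
      simp [Nat.add_comm]
    have h1 : pochX 1 (m + 1)
        = pochX 1 m * (1 - PowerSeries.C (q ^ (m + 1)) * PowerSeries.X) := by
      rw [pochX, Finset.prod_range_succ, pochX]
      simp [Nat.add_comm]
    have hXinv : (1 - PowerSeries.X : PowerSeries K)⁻¹ * (1 - PowerSeries.X) = 1 :=
      PowerSeries.inv_mul_cancel _ (by simp)
    apply mul_right_cancel₀ (pochX_ne 1 (m + 1))
    rw [pochX_inv_mul, add_mul]
    have e1 : (1 - PowerSeries.X) * (pochX 0 (m + 1))⁻¹ * pochX 1 (m + 1)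
        = 1 - PowerSeries.C (q ^ (m + 1)) * PowerSeries.X := by
      rw [h0, h1, PowerSeries.mul_inv_rev]
      calc (1 - PowerSeries.X) * ((pochX 1 m)⁻¹ * (1 - PowerSeries.X)⁻¹)
            * (pochX 1 m * (1 - PowerSeries.C (q ^ (m + 1)) * PowerSeries.X))
          = ((1 - PowerSeries.X)⁻¹ * (1 - PowerSeries.X)) * ((pochX 1 m)⁻¹ * pochX 1 m)
            * (1 - PowerSeries.C (q ^ (m + 1)) * PowerSeries.X) := by ring
        _ = 1 - PowerSeries.C (q ^ (m + 1)) * PowerSeries.X := by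
            rw [hXinv, pochX_inv_mul]; ring
    have e2 : PowerSeries.C (q ^ (m + 1)) * PowerSeries.X * (pochX 1 (m + 1))⁻¹
        * pochX 1 (m + 1) = PowerSeries.C (q ^ (m + 1)) * PowerSeries.X := by
      calc PowerSeries.C (q ^ (m + 1)) * PowerSeries.X * (pochX 1 (m + 1))⁻¹
            * pochX 1 (m + 1)
          = PowerSeries.C (q ^ (m + 1)) * PowerSeries.X
            * ((pochX 1 (m + 1))⁻¹ * pochX 1 (m + 1)) := by ring
        _ = _ := by rw [pochX_inv_mul]; ring
    rw [e1, e2]; ring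

lemma rescale_C' (a b : K) : rescale a (PowerSeries.C b) = PowerSeries.C b := by
  ext n
  rw [coeff_rescale]
  cases n with
  | zero => simp
  | succ m => simp [PowerSeries.coeff_C]

lemma rescale_pochX (n : ℕ) : rescale q (pochX 0 n) = pochX 1 n := by
  rw [pochX, pochX, map_prod]
  refine Finset.prod_congr rfl fun i _ => ?_
  rw [map_sub, map_one, map_mul, rescale_C', rescale_X, zero_add]
  rw [← mul_assoc, ← map_mul, ← pow_succ, Nat.add_comm i 1]

lemma rescale_pochX_inv (n : ℕ) : rescale q ((pochX 0 n)⁻¹) = (pochX 1 n)⁻¹ := by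
  apply mul_right_cancel₀ (pochX_ne 1 n)
  rw [pochX_inv_mul]
  conv_lhs => rw [← rescale_pochX n, ← map_mul, pochX_inv_mul, map_one]

/-- Termwise identity: `T 1 n = (1-x)·T 0 n + x·(T 0 n)(qx)`. -/
lemma T_key (n : ℕ) : T 1 n = (1 - PowerSeries.X) * T 0 n
    + PowerSeries.X * rescale q (T 0 n) := by
  have hres : rescale q (T 0 n)
      = PowerSeries.C (c n) * (PowerSeries.C (q ^ n)
        * (PowerSeries.X ^ n * (pochX 1 n)⁻¹)) := by
    rw [T, map_mul, map_mul, map_pow, rescale_C', rescale_X, rescale_pochX_inv]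
    rw [mul_pow, ← map_pow]
    ring
  rw [hres, T, T]
  have := key n
  linear_combination (PowerSeries.C (c n) * PowerSeries.X ^ n) * this

lemma coeff_T (s n N : ℕ) :
    PowerSeries.coeff N (T s n)
      = if n ≤ N then c n * PowerSeries.coeff (N - n) (pochX s n)⁻¹ else 0 := by
  rw [T, PowerSeries.coeff_C_mul, PowerSeries.coeff_X_pow_mul']
  split <;> simp

lemma coeff_sum_T (s : ℕ) (N m : ℕ) (h : m ≤ N) :
    PowerSeries.coeff m (∑ n ∈ Finset.range (N + 1), T s n)
      = ∑ n ∈ Finset.range (m + 1), c n * PowerSeries.coeff (m - n) (pochX s n)⁻¹ := by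
  rw [map_sum]
  rw [← Finset.sum_subset (Finset.range_subset_range.2 (by omega) :
      Finset.range (m + 1) ⊆ Finset.range (N + 1))]
  · refine Finset.sum_congr rfl fun n hn => ?_
    rw [coeff_T, if_pos (by simpa using Nat.lt_succ_iff.mp (Finset.mem_range.mp hn))]
  · intro n _ hn
    rw [coeff_T, if_neg (by simp at hn; omega)]

lemma coeff_H (N m : ℕ) (h : m ≤ N) :
    PowerSeries.coeff m H
      = PowerSeries.coeff m (∑ n ∈ Finset.range (N + 1), T 0 n) := by
  rw [coeff_sum_T 0 N m h, H, coeff_mk]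
  rfl

lemma coeff_J (N m : ℕ) (h : m ≤ N) :
    PowerSeries.coeff m J
      = PowerSeries.coeff m (∑ n ∈ Finset.range (N + 1), T 1 n) := by
  rw [coeff_sum_T 1 N m h, J, coeff_mk]
  rfl

lemma coeff_mul_congr (P A B : PowerSeries K) (N : ℕ)
    (h : ∀ m ≤ N, PowerSeries.coeff m A = PowerSeries.coeff m B) :
    PowerSeries.coeff N (P * A) = PowerSeries.coeff N (P * B) := by
  rw [PowerSeries.coeff_mul, PowerSeries.coeff_mul]
  refine Finset.sum_congr rfl fun p hp => ?_
  have h2 : p.2 ≤ N := by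
    have := Finset.HasAntidiagonal.antidiagonal.fst_le hp
    have hsum := Finset.HasAntidiagonal.mem_antidiagonal.mp hp
    omega
  rw [h p.2 h2]

set_option maxHeartbeats 1000000 in
/-- `J(x) = (1-x)·H(x) + x·H(xq)`. -/
theorem stmt0 : J = (1 - PowerSeries.X) * H + PowerSeries.X * rescale q H := by
  ext N
  set A : PowerSeries K := ∑ n ∈ Finset.range (N + 1), T 0 n with hA
  have hAH : ∀ m ≤ N, PowerSeries.coeff m H = PowerSeries.coeff m A :=
    fun m hm => coeff_H N m hm
  have hAHr : ∀ m ≤ N, PowerSeries.coeff m (rescale q H)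
      = PowerSeries.coeff m (rescale q A) := by
    intro m hm
    rw [coeff_rescale, coeff_rescale, hAH m hm]
  calc PowerSeries.coeff N J
      = PowerSeries.coeff N (∑ n ∈ Finset.range (N + 1), T 1 n) := coeff_J N N le_rfl
    _ = PowerSeries.coeff N (∑ n ∈ Finset.range (N + 1),
          ((1 - PowerSeries.X) * T 0 n + PowerSeries.X * rescale q (T 0 n))) := by
        congr 1
        exact Finset.sum_congr rfl fun n _ => T_key n
    _ = PowerSeries.coeff N
          ((1 - PowerSeries.X) * A + PowerSeries.X * rescale q A) := by
        congr 1
        rw [Finset.sum_add_distrib, ← Finset.mul_sum, ← Finset.mul_sum, ← map_sum]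
    _ = PowerSeries.coeff N
          ((1 - PowerSeries.X) * H + PowerSeries.X * rescale q H) := by
        rw [map_add, map_add,
          coeff_mul_congr (1 - PowerSeries.X) A H N (fun m hm => (hAH m hm).symm),
          coeff_mul_congr PowerSeries.X (rescale q A) (rescale q H) N
            (fun m hm => (hAHr m hm).symm)]

end FC
end
end

section
/- Let J-cal(x) = Σ_{n≥0} (-1)^{⌈n/2⌉} x^n q^{n(n-1)/2} / (q²;q²)_{⌊n/2⌋}. Then (1-2xq)·J-cal(x) - (1-x(1+q))·J-cal(xq) + x²q²(1-2x)·J-cal(xq²) = 0. -/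
open PowerSeries

noncomputable section
namespace FC

/-- `(q²;q²)_m = ∏_{i=1}^{m} (1 - q^{2i})`. -/
def poch2 (m : ℕ) : K := ∏ i ∈ Finset.range m, (1 - q ^ (2 * (i + 1)))

/-- `𝒥(x) = Σ_{n≥0} (-1)^{⌈n/2⌉} x^n q^{C(n,2)} / (q²;q²)_{⌊n/2⌋}`. -/
def Jcal : PowerSeries K :=
  PowerSeries.mk fun n => (-1 : K) ^ ((n + 1) / 2) * q ^ n.choose 2 / poch2 (n / 2)

/-- `𝒦(x) = Σ_{n≥0} x^n q^{n(n+1)/2} Σ_{k=0}^{⌊n/2⌋} (-1)^k/(q²;q²)_k`. -/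
def Kcal : PowerSeries K :=
  PowerSeries.mk fun n =>
    q ^ (n * (n + 1) / 2) * ∑ k ∈ Finset.range (n / 2 + 1), (-1 : K) ^ k / poch2 k

lemma q_pow_ne_one {m : ℕ} (hm : 0 < m) : q ^ m ≠ 1 := by
  intro h
  have : (Polynomial.X : Polynomial ℚ) ^ m = 1 := by
    apply RatFunc.algebraMap_injective ℚ
    simpa [map_pow, RatFunc.algebraMap_X, q] using h
  have := congrArg Polynomial.natDegree this
  simp [Polynomial.natDegree_X_pow] at this
  omega

lemma one_sub_q_pow_ne_zero {m : ℕ} (hm : 0 < m) : (1 : K) - q ^ m ≠ 0 := by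
  intro h
  exact q_pow_ne_one hm (by linear_combination -h)

lemma poch2_ne_zero (m : ℕ) : poch2 m ≠ 0 := by
  apply Finset.prod_ne_zero_iff.mpr
  intro i _
  have := one_sub_q_pow_ne_zero (m := 2 * (i + 1)) (by omega)
  simpa using this

lemma poch2_succ (m : ℕ) : poch2 (m + 1) = poch2 m * (1 - q ^ (2 * (m + 1))) :=
  Finset.prod_range_succ _ m

lemma hch (n : ℕ) : (n + 1).choose 2 = n.choose 2 + n := by
  rw [Nat.choose_succ_succ']
  simp [Nat.choose_one_right, Nat.add_comm]

lemma cXm (m n : ℕ) (f : PowerSeries K) (h : m ≤ n) :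
    coeff (R := K) n (X ^ m * f) = coeff (R := K) (n - m) f := by
  rw [coeff_X_pow_mul']; exact if_pos h


set_option maxHeartbeats 1600000 in
/-- `(1-2xq)·𝒥(x) - (1-x(1+q))·𝒥(xq) + x²q²(1-2x)·𝒥(xq²) = 0`. -/
theorem stmt7 :
    (1 - 2 * PowerSeries.C (R := K) q * PowerSeries.X) * Jcal
      - (1 - PowerSeries.C (R := K) (1 + q) * PowerSeries.X) * rescale q Jcal
      + PowerSeries.X ^ 2 * PowerSeries.C (R := K) (q ^ 2) * (1 - 2 * PowerSeries.X) *
          rescale (q ^ 2) Jcal = 0 := by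
  have key : (1 - 2 * PowerSeries.C (R := K) q * PowerSeries.X) * Jcal
      - (1 - PowerSeries.C (R := K) (1 + q) * PowerSeries.X) * rescale q Jcal
      + PowerSeries.X ^ 2 * PowerSeries.C (R := K) (q ^ 2) * (1 - 2 * PowerSeries.X) *
          rescale (q ^ 2) Jcal
      = Jcal - C (R := K) (2 * q) * (X ^ 1 * Jcal) - rescale q Jcal
        + C (R := K) 1 * (X ^ 1 * rescale q Jcal) + C (R := K) q * (X ^ 1 * rescale q Jcal)
        + C (R := K) (q ^ 2) * (X ^ 2 * rescale (q ^ 2) Jcal)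
        - C (R := K) (2 * q ^ 2) * (X ^ 3 * rescale (q ^ 2) Jcal) := by
    simp only [map_mul, map_add, map_pow, map_ofNat, map_one]
    ring
  rw [key]
  ext n
  simp only [map_sub, map_add, coeff_C_mul, map_zero]
  rcases n with _ | _ | _ | k
  · norm_num [cXm, coeff_X_pow_mul', coeff_rescale, Jcal, coeff_mk, poch2]
  · norm_num [coeff_X_pow_mul', coeff_rescale, Jcal, coeff_mk, poch2]
    ring
  · have h2 : (1 : K) - q ^ 2 ≠ 0 := one_sub_q_pow_ne_zero (by omega)
    norm_num [coeff_X_pow_mul', coeff_rescale, Jcal, coeff_mk, poch2,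
      Finset.prod_range_succ]
    field_simp
    ring
  · rw [show k + 1 + 1 + 1 = k + 3 from rfl]
    rw [cXm 1 (k + 3) _ (by omega), cXm 1 (k + 3) _ (by omega),
      cXm 2 (k + 3) _ (by omega), cXm 3 (k + 3) _ (by omega)]
    rw [show k + 3 - 1 = k + 2 from rfl, show k + 3 - 2 = k + 1 from rfl,
      show k + 3 - 3 = k from rfl]
    simp only [coeff_rescale, Jcal, coeff_mk]
    obtain ⟨j, rfl | rfl⟩ := Nat.even_or_odd' k
    · have c1 : (2 * j + 1).choose 2 = (2 * j).choose 2 + 2 * j := hch (2 * j)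
      have c2 : (2 * j + 2).choose 2 = (2 * j).choose 2 + (4 * j + 1) := by
        rw [show 2 * j + 2 = (2 * j + 1) + 1 from rfl, hch, c1]; omega
      have c3 : (2 * j + 3).choose 2 = (2 * j).choose 2 + (6 * j + 3) := by
        rw [show 2 * j + 3 = (2 * j + 2) + 1 from rfl, hch, c2]; omega
      simp only [show (2 * j + 3 + 1) / 2 = j + 2 from by omega,
        show (2 * j + 3) / 2 = j + 1 from by omega,
        show (2 * j + 2 + 1) / 2 = j + 1 from by omega,
        show (2 * j + 2) / 2 = j + 1 from by omega,
        show (2 * j + 1 + 1) / 2 = j + 1 from by omega,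
        show (2 * j + 1) / 2 = j from by omega,
        show 2 * j / 2 = j from by omega,
        c1, c2, c3, poch2_succ, show 2 * (j + 1) = 2 * j + 2 from by omega]
      obtain ⟨A, hA⟩ : ∃ x : K, x = 1 - q ^ (2 * j + 2) := ⟨_, rfl⟩
      rw [← hA]
      have hp : poch2 j ≠ 0 := poch2_ne_zero j
      have hs : A ≠ 0 := by rw [hA]; exact one_sub_q_pow_ne_zero (by omega)
      field_simp
      rw [hA]
      ring
    · have c1 : (2 * j + 2).choose 2 = (2 * j + 1).choose 2 + (2 * j + 1) := by
        rw [show 2 * j + 2 = (2 * j + 1) + 1 from rfl, hch]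
      have c2 : (2 * j + 3).choose 2 = (2 * j + 1).choose 2 + (4 * j + 3) := by
        rw [show 2 * j + 3 = (2 * j + 2) + 1 from rfl, hch, c1]; omega
      have c3 : (2 * j + 4).choose 2 = (2 * j + 1).choose 2 + (6 * j + 6) := by
        rw [show 2 * j + 4 = (2 * j + 3) + 1 from rfl, hch, c2]; omega
      rw [show 2 * j + 1 + 3 = 2 * j + 4 from rfl, show 2 * j + 1 + 2 = 2 * j + 3 from rfl,
        show 2 * j + 1 + 1 = 2 * j + 2 from rfl]
      simp only [show (2 * j + 4 + 1) / 2 = j + 2 from by omega,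
        show (2 * j + 4) / 2 = j + 2 from by omega,
        show (2 * j + 3 + 1) / 2 = j + 2 from by omega,
        show (2 * j + 3) / 2 = j + 1 from by omega,
        show (2 * j + 2 + 1) / 2 = j + 1 from by omega,
        show (2 * j + 2) / 2 = j + 1 from by omega,
        show (2 * j + 1 + 1) / 2 = j + 1 from by omega,
        show (2 * j + 1) / 2 = j from by omega,
        c1, c2, c3, poch2_succ, show 2 * (j + 1) = 2 * j + 2 from by omega,
        show 2 * (j + 1 + 1) = 2 * j + 4 from by omega]
      obtain ⟨A, hA⟩ : ∃ x : K, x = 1 - q ^ (2 * j + 2) := ⟨_, rfl⟩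
      obtain ⟨B, hB⟩ : ∃ x : K, x = 1 - q ^ (2 * j + 4) := ⟨_, rfl⟩
      rw [← hA, ← hB]
      have hp : poch2 j ≠ 0 := poch2_ne_zero j
      have hs : A ≠ 0 := by rw [hA]; exact one_sub_q_pow_ne_zero (by omega)
      have hs2 : B ≠ 0 := by rw [hB]; exact one_sub_q_pow_ne_zero (by omega)
      have hD : poch2 j * A * B ≠ 0 := mul_ne_zero (mul_ne_zero hp hs) hs2
      have r2 : ∀ x : K, x / (poch2 j * A) = x * B / (poch2 j * A * B) := fun x => by
        rw [div_eq_div_iff (mul_ne_zero hp hs) hD]; ring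
      have r3 : ∀ x : K, x / poch2 j = x * (A * B) / (poch2 j * A * B) := fun x => by
        rw [div_eq_div_iff hp hD]; ring
      simp only [r2, r3, ← mul_div_assoc, ← add_div, div_sub_div_same]
      rw [div_eq_zero_iff]
      refine Or.inl ?_
      rw [hA, hB]
      ring

end FC
end
end

section
/- Let J-cal(x) = Σ_{n≥0} (-1)^{⌈n/2⌉} x^n q^{n(n-1)/2} / (q²;q²)_{⌊n/2⌋} and let Je(x) be its even part in x, i.e., Je(x) = (J-cal(x)+J-cal(-x))/2. Then J-cal(x) = Je(x) - x·Je(xq), and Je satisfies Je(x) - Je(xq) + x²q·Je(xq²) = 0. -/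
open PowerSeries

noncomputable section
namespace FC

/-- The even part `𝒥ₑ(x) = (𝒥(x) + 𝒥(-x))/2`. -/
def Je : PowerSeries K := PowerSeries.C (R := K) (1 / 2) * (Jcal + rescale (-1) Jcal)

lemma two_ne_zero' : (2 : K) ≠ 0 := by
  have h : (algebraMap (Polynomial ℚ) K) 2 = 2 := map_ofNat _ 2
  rw [← h]
  exact RatFunc.algebraMap_ne_zero (by norm_num)

lemma q_pow_ne_one_s9 (k : ℕ) (hk : k ≠ 0) : q ^ k ≠ 1 := by
  intro h
  have h2 : algebraMap (Polynomial ℚ) K (Polynomial.X ^ k) = algebraMap (Polynomial ℚ) K 1 := by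
    simpa [q, RatFunc.algebraMap_X, map_pow] using h
  have h3 : (Polynomial.X : Polynomial ℚ) ^ k = 1 := RatFunc.algebraMap_injective ℚ h2
  have h4 := congrArg Polynomial.natDegree h3
  simp [Polynomial.natDegree_X_pow] at h4
  exact hk h4

def a (n : ℕ) : K := (-1 : K) ^ ((n + 1) / 2) * q ^ n.choose 2 / poch2 (n / 2)

lemma coeff_Jcal (n : ℕ) : coeff n Jcal = a n := coeff_mk n _

lemma coeff_Je (n : ℕ) : coeff n Je = if Even n then a n else 0 := by
  unfold Je
  rw [coeff_C_mul, map_add, coeff_rescale, coeff_Jcal]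
  rcases Nat.even_or_odd n with h | h
  · rw [if_pos h, h.neg_one_pow, one_mul, ← two_mul, one_div, ← mul_assoc,
      inv_mul_cancel₀ two_ne_zero', one_mul]
  · rw [if_neg (Nat.not_even_iff_odd.mpr h), h.neg_one_pow]; ring

lemma choose2_succ (n : ℕ) : (n + 1).choose 2 = n + n.choose 2 := by
  rw [Nat.choose_succ_succ]; simp [Nat.choose_one_right]

lemma a_odd (m : ℕ) : a (2 * m + 1) = - (q ^ (2 * m) * a (2 * m)) := by
  unfold a
  have h1 : (2 * m + 1 + 1) / 2 = m + 1 := by omega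
  have h2 : (2 * m + 1) / 2 = m := by omega
  have h3 : (2 * m) / 2 = m := by omega
  rw [h1, h2, h3, choose2_succ, pow_add, pow_succ]
  ring

lemma a_even_succ (m : ℕ) :
    a (2 * (m + 1)) * (1 - q ^ (2 * (m + 1))) = - (q ^ (4 * m + 1) * a (2 * m)) := by
  unfold a
  have h1 : (2 * (m + 1) + 1) / 2 = m + 1 := by omega
  have h2 : (2 * (m + 1)) / 2 = m + 1 := by omega
  have h3 : (2 * m + 1) / 2 = m := by omega
  have h4 : (2 * m) / 2 = m := by omega
  have hc : (2 * (m + 1)).choose 2 = 4 * m + 1 + (2 * m).choose 2 := by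
    have h : 2 * (m + 1) = (2 * m + 1) + 1 := by ring
    rw [h, choose2_succ, choose2_succ]; omega
  have hp : poch2 (m + 1) = poch2 m * (1 - q ^ (2 * (m + 1))) := by
    unfold poch2; rw [Finset.prod_range_succ]
  have hz : (1 - q ^ (2 * (m + 1))) ≠ 0 :=
    sub_ne_zero.mpr (Ne.symm (q_pow_ne_one_s9 _ (by omega)))
  rw [h1, h2, h3, h4, hc, hp]
  rw [div_mul_eq_div_div, div_mul_cancel₀ _ hz]
  rw [pow_add, pow_succ]
  ring

/-- `𝒥(x) = 𝒥ₑ(x) - x·𝒥ₑ(xq)` and `𝒥ₑ(x) - 𝒥ₑ(xq) + x²q·𝒥ₑ(xq²) = 0`. -/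
theorem stmt9 :
    Jcal = Je - PowerSeries.X * rescale q Je ∧
    Je - rescale q Je + PowerSeries.X ^ 2 * PowerSeries.C (R := K) q * rescale (q ^ 2) Je = 0 := by
  constructor
  · ext n
    rw [map_sub, coeff_Jcal]
    rcases n with _ | n
    · simp [coeff_Je, a]
    · rw [coeff_succ_X_mul, coeff_rescale, coeff_Je, coeff_Je]
      rcases Nat.even_or_odd n with ⟨m, hm⟩ | hodd
      · have hn : n = 2 * m := by omega
        subst hn
        rw [if_neg (by simp [parity_simps]), if_pos (even_two_mul m), a_odd]
        ring
      · obtain ⟨m, hm⟩ := hodd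
        subst hm
        have h6 : 2 * m + 1 + 1 = 2 * (m + 1) := by ring
        rw [h6, if_pos (even_two_mul (m + 1)), if_neg (by simp [parity_simps])]
        simp
  · ext n
    have hcomm : PowerSeries.X ^ 2 * PowerSeries.C (R := K) q * rescale (q ^ 2) Je
        = (PowerSeries.C (R := K) q * rescale (q ^ 2) Je) * PowerSeries.X ^ 2 := by ring
    rw [map_add, map_sub, coeff_rescale, coeff_Je, map_zero, hcomm, coeff_mul_X_pow']
    rcases Nat.even_or_odd n with ⟨m, hm⟩ | hodd
    · have hn : n = 2 * m := by omega
      subst hn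
      rw [if_pos (even_two_mul m)]
      rcases m with _ | m
      · simp
      · rw [if_pos (by omega : 2 ≤ 2 * (m + 1))]
        have h5 : 2 * (m + 1) - 2 = 2 * m := by omega
        rw [h5, coeff_C_mul, coeff_rescale, coeff_Je, if_pos (even_two_mul m)]
        linear_combination a_even_succ m
    · obtain ⟨m, hm⟩ := hodd
      subst hm
      rw [if_neg (by simp [parity_simps])]
      rcases m with _ | m
      · simp
      · rw [if_pos (by omega : 2 ≤ 2 * (m + 1) + 1)]
        have h5 : 2 * (m + 1) + 1 - 2 = 2 * m + 1 := by omega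
        rw [h5, coeff_C_mul, coeff_rescale, coeff_Je, if_neg (by simp [parity_simps])]
        simp


end FC
end
end

section
/- Iterating the functional equation A(s) = 1/(1-xsq) + (x/((1-sq)(1-xsq)))·A(1) - (xsq/((1-sq)(1-xsq)))·A(sq) yields A(s) = Σ_{n≥0} ((-xs)^n q^{n(n+1)/2} / ((sq;q)_n (xsq;q)_n)) · (1/(1-xsq^{n+1}) + (x/((1-sq^{n+1})(1-xsq^{n+1})))·A(1)), as formal power series in x. -/
open PowerSeries

noncomputable section
namespace FC

/-- The field `ℚ(q)(s)` of rational functions in `s` over `ℚ(q)`. -/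
abbrev S : Type := RatFunc K

/-- The variable `s`. -/
def sS : S := RatFunc.X

/-- `q` as an element of `ℚ(q)(s)`. -/
def qS : S := RatFunc.C q

/-- A power series in `x` over `ℚ(q)(s)` has coefficients polynomial in `s`
(and hence in `s` and `q`, up to denominators in `q` alone). -/
def PolyCoeffs (A : PowerSeries S) : Prop :=
  ∀ n, (PowerSeries.coeff n A).denom = 1

/-- Evaluation of a rational function of `s` at `s = 1`. -/
def ev1 (f : S) : K := RatFunc.eval (RingHom.id K) 1 f

/-- `A(1)`: evaluate each coefficient at `s = 1`, giving a power series in `x` over `ℚ(q)`. -/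
def atOneK (A : PowerSeries S) : PowerSeries K :=
  PowerSeries.mk fun n => ev1 (PowerSeries.coeff n A)

/-- `A(1)`, lifted back to a power series over `ℚ(q)(s)`. -/
def atOne (A : PowerSeries S) : PowerSeries S :=
  PowerSeries.mk fun n => RatFunc.C (ev1 (PowerSeries.coeff n A))

/-- Substitution `s ↦ s·q^j` in each coefficient. -/
def atSq (j : ℕ) (A : PowerSeries S) : PowerSeries S :=
  PowerSeries.mk fun n =>
    RatFunc.eval (RatFunc.C : K →+* S) (RatFunc.C (q ^ j) * RatFunc.X)
      (PowerSeries.coeff n A)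

/-- The q-Pochhammer symbol `(a; q)_n = ∏_{i=0}^{n-1} (1 - a q^i)` in `ℚ(q)(s)`. -/
def pochS (a : S) (n : ℕ) : S := ∏ i ∈ Finset.range n, (1 - a * qS ^ i)

/-- The power series `(x s q^{t}; q)_n = ∏_{i=0}^{n-1} (1 - s q^{t+i} x)` in `x` over `ℚ(q)(s)`. -/
def pochXs (t n : ℕ) : PowerSeries S :=
  ∏ i ∈ Finset.range n, (1 - PowerSeries.C (sS * qS ^ (t + i)) * PowerSeries.X)

/-- The inner factor `1/(1-xsq^{n+1}) + (x/((1-sq^{n+1})(1-xsq^{n+1})))·A(1)`. -/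
def inner15 (n : ℕ) (A : PowerSeries S) : PowerSeries S :=
  (1 - PowerSeries.C (sS * qS ^ (n + 1)) * PowerSeries.X)⁻¹
    + PowerSeries.X * PowerSeries.C ((1 - sS * qS ^ (n + 1))⁻¹) *
        (1 - PowerSeries.C (sS * qS ^ (n + 1)) * PowerSeries.X)⁻¹ * atOne A

----------------------------------------------------------------
-- substitution ring homs (verified above)

def phi (j : ℕ) : Polynomial K →+* S :=
  Polynomial.eval₂RingHom (RatFunc.C : K →+* S) (RatFunc.C (q ^ j) * RatFunc.X)

lemma q_ne_zero : q ≠ 0 := RatFunc.X_ne_zero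

lemma phi_eq (j : ℕ) (p : Polynomial K) :
    phi j p = algebraMap (Polynomial K) S (p.comp (Polynomial.C (q ^ j) * Polynomial.X)) := by
  rw [Polynomial.comp, Polynomial.hom_eval₂]
  simp only [phi, Polynomial.coe_eval₂RingHom]
  congr 1
  simp [RatFunc.algebraMap_C, RatFunc.algebraMap_X]

lemma phi_ne_zero (j : ℕ) {p : Polynomial K} (hp : p ≠ 0) : phi j p ≠ 0 := by
  rw [phi_eq]
  apply RatFunc.algebraMap_ne_zero
  intro h
  rcases Polynomial.comp_eq_zero_iff.mp h with h' | ⟨_, h'⟩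
  · exact hp h'
  · have h1 : (Polynomial.C (q^j) * Polynomial.X : Polynomial K).coeff 1 = 0 := by
      rw [h']; simp [Polynomial.coeff_C]
    simp at h1
    rw [← Polynomial.C_pow, Polynomial.coeff_C_zero] at h1
    exact pow_ne_zero j q_ne_zero h1

lemma phi_mem (j : ℕ) :
    nonZeroDivisors (Polynomial K) ≤ Submonoid.comap (phi j) (nonZeroDivisors S) := by
  intro p hp
  simp only [Submonoid.mem_comap]
  rw [mem_nonZeroDivisors_iff_ne_zero]
  exact phi_ne_zero j (nonZeroDivisors.ne_zero hp)

def σ (j : ℕ) : S →+* S := RatFunc.liftRingHom (phi j) (phi_mem j)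

lemma eval_eq_σ (j : ℕ) (f : S) :
    RatFunc.eval (RatFunc.C : K →+* S) (RatFunc.C (q ^ j) * RatFunc.X) f = σ j f := by
  rw [RatFunc.eval, σ, RatFunc.liftRingHom_apply]
  simp [phi]

lemma σ_algebraMap (j : ℕ) (p : Polynomial K) :
    σ j (algebraMap (Polynomial K) S p) = phi j p := by
  have := RatFunc.liftRingHom_apply_div (phi j) (phi_mem j) p 1
  simpa [σ] using this

lemma σ_C (j : ℕ) (k : K) : σ j (RatFunc.C k) = RatFunc.C k := by
  rw [← RatFunc.algebraMap_C, σ_algebraMap, phi_eq]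
  simp [RatFunc.algebraMap_C]

lemma σ_X (j : ℕ) : σ j sS = sS * qS ^ j := by
  rw [sS, ← RatFunc.algebraMap_X, σ_algebraMap, phi_eq]
  simp only [Polynomial.X_comp]
  rw [map_mul, RatFunc.algebraMap_C, RatFunc.algebraMap_X, qS, ← map_pow]
  ring

lemma σ_comp (m : ℕ) (f : S) : σ m (σ 1 f) = σ (m + 1) f := by
  conv_lhs => rw [← RatFunc.num_div_denom f]
  conv_rhs => rw [← RatFunc.num_div_denom f]
  rw [map_div₀, map_div₀, map_div₀]
  congr 1 <;>
  · rw [σ_algebraMap, phi_eq, σ_algebraMap, phi_eq, σ_algebraMap, phi_eq,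
      Polynomial.comp_assoc]
    congr 2
    simp [Polynomial.mul_comp, pow_succ]
    ring

lemma σ_zero (f : S) : σ 0 f = f := by
  conv_rhs => rw [← RatFunc.num_div_denom f]
  conv_lhs => rw [← RatFunc.num_div_denom f]
  rw [map_div₀]
  congr 1 <;> rw [σ_algebraMap, phi_eq] <;> simp

lemma σ_s_pow (j k : ℕ) : σ j (sS * qS ^ k) = sS * qS ^ (j + k) := by
  rw [map_mul, σ_X, map_pow, qS, σ_C, ← qS, pow_add]
  ring

----------------------------------------------------------------
-- power series lemmas

lemma atSq_map (j : ℕ) (A : PowerSeries S) :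
    atSq j A = PowerSeries.map (σ j) A := by
  ext n
  rw [atSq]
  simp only [PowerSeries.coeff_mk, PowerSeries.coeff_map]
  exact eval_eq_σ j _

lemma atSq_zero (A : PowerSeries S) : atSq 0 A = A := by
  rw [atSq_map]
  ext n
  simp [PowerSeries.coeff_map, σ_zero]

lemma map_atOne (j : ℕ) (A : PowerSeries S) :
    PowerSeries.map (σ j) (atOne A) = atOne A := by
  ext n
  simp [atOne, PowerSeries.coeff_map, σ_C]

lemma map_atSq_one (m : ℕ) (A : PowerSeries S) :
    PowerSeries.map (σ m) (atSq 1 A) = atSq (m + 1) A := by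
  rw [atSq_map, atSq_map]
  ext n
  simp [PowerSeries.coeff_map, σ_comp]

lemma one_sub_sq (k : ℕ) : (1 : S) - sS * qS ^ k ≠ 0 := by
  have : (1 : S) - sS * qS ^ k
      = algebraMap (Polynomial K) S (1 - Polynomial.C (q ^ k) * Polynomial.X) := by
    rw [map_sub, map_one, map_mul, RatFunc.algebraMap_C, RatFunc.algebraMap_X,
      sS, qS, ← map_pow]
    ring
  rw [this]
  apply RatFunc.algebraMap_ne_zero
  intro h
  have h1 : ((1 : Polynomial K) - Polynomial.C (q ^ k) * Polynomial.X).coeff 1 = -(q ^ k) := by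
    rw [Polynomial.coeff_sub, Polynomial.coeff_C_mul, Polynomial.coeff_X_one, Polynomial.coeff_one]
    simp
  rw [h] at h1
  simp [eq_comm] at h1
  exact q_ne_zero h1.1

lemma poch_ne (n : ℕ) : pochS (sS * qS) n ≠ 0 := by
  rw [pochS]
  apply Finset.prod_ne_zero_iff.mpr
  intro i _
  have : (1 : S) - sS * qS * qS ^ i = 1 - sS * qS ^ (i + 1) := by
    rw [pow_succ]; ring
  rw [this]
  exact one_sub_sq (i + 1)

lemma constE (a : S) :
    constantCoeff (1 - PowerSeries.C a * PowerSeries.X) ≠ 0 := by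
  simp

lemma map_invE (j : ℕ) (a : S) :
    PowerSeries.map (σ j) ((1 - PowerSeries.C a * PowerSeries.X)⁻¹)
      = (1 - PowerSeries.C (σ j a) * PowerSeries.X)⁻¹ := by
  rw [eq_comm, PowerSeries.inv_eq_iff_mul_eq_one (constE (σ j a))]
  have : (1 - PowerSeries.C (σ j a) * PowerSeries.X)
      = PowerSeries.map (σ j) (1 - PowerSeries.C a * PowerSeries.X) := by
    simp
  rw [this, ← map_mul, PowerSeries.inv_mul_cancel _ (constE a), map_one]

lemma σ_inv_one_sub (j k : ℕ) :
    σ j ((1 - sS * qS ^ k)⁻¹) = (1 - sS * qS ^ (j + k))⁻¹ := by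
  rw [map_inv₀, map_sub, map_one, σ_s_pow]

lemma tri_succ (m : ℕ) : (m + 1) * (m + 1 + 1) / 2 = m * (m + 1) / 2 + (m + 1) := by
  have e1 : 2 ∣ m * (m + 1) := (Nat.even_mul_succ_self m).two_dvd
  have e2 : 2 ∣ (m + 1) * (m + 1 + 1) := (Nat.even_mul_succ_self (m + 1)).two_dvd
  have h1 : m * (m + 1) / 2 * 2 = m * (m + 1) := Nat.div_mul_cancel e1
  have h2 : (m + 1) * (m + 1 + 1) / 2 * 2 = (m + 1) * (m + 1 + 1) := Nat.div_mul_cancel e2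
  have h3 : (m + 1) * (m + 1 + 1) = m * (m + 1) + 2 * (m + 1) := by ring
  omega

lemma cc_succ (m : ℕ) :
    (-sS) ^ (m + 1) * qS ^ ((m + 1) * (m + 1 + 1) / 2) / pochS (sS * qS) (m + 1)
      = ((-sS) ^ m * qS ^ (m * (m + 1) / 2) / pochS (sS * qS) m) * (-(sS * qS ^ (m + 1)))
          * (1 - sS * qS ^ (m + 1))⁻¹ := by
  have hsucc : pochS (sS * qS) (m + 1) = pochS (sS * qS) m * (1 - sS * qS ^ (m + 1)) := by
    rw [pochS, pochS, Finset.prod_range_succ, pow_succ]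
    ring
  rw [hsucc, tri_succ, pow_add, pow_succ]
  have hP := poch_ne m
  have h1 := one_sub_sq (m + 1)
  field_simp
  ring

lemma pochXs_succ (m : ℕ) :
    pochXs 1 (m + 1) = pochXs 1 m * (1 - PowerSeries.C (sS * qS ^ (m + 1)) * PowerSeries.X) := by
  rw [pochXs, pochXs, Finset.prod_range_succ, add_comm 1 m]

lemma pochXs_inv_succ (m : ℕ) :
    (pochXs 1 (m + 1))⁻¹
      = (1 - PowerSeries.C (sS * qS ^ (m + 1)) * PowerSeries.X)⁻¹ * (pochXs 1 m)⁻¹ := by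
  rw [pochXs_succ, PowerSeries.mul_inv_rev]

lemma σ_s_q (j : ℕ) : σ j (sS * qS) = sS * qS ^ (j + 1) := by
  have := σ_s_pow j 1
  simpa using this

lemma σ_inv_one_sub_q (j : ℕ) : σ j ((1 - sS * qS)⁻¹) = (1 - sS * qS ^ (j + 1))⁻¹ := by
  rw [map_inv₀, map_sub, map_one, σ_s_q]

lemma step (A : PowerSeries S)
    (hA : A = (1 - PowerSeries.C (sS * qS) * PowerSeries.X)⁻¹
        + PowerSeries.X * PowerSeries.C ((1 - sS * qS)⁻¹) *
            (1 - PowerSeries.C (sS * qS) * PowerSeries.X)⁻¹ * atOne A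
        - PowerSeries.C (sS * qS) * PowerSeries.X * PowerSeries.C ((1 - sS * qS)⁻¹) *
            (1 - PowerSeries.C (sS * qS) * PowerSeries.X)⁻¹ * atSq 1 A) (m : ℕ) :
    atSq m A = inner15 m A
      - PowerSeries.C (sS * qS ^ (m + 1)) * PowerSeries.X
          * PowerSeries.C ((1 - sS * qS ^ (m + 1))⁻¹)
          * (1 - PowerSeries.C (sS * qS ^ (m + 1)) * PowerSeries.X)⁻¹ * atSq (m + 1) A := by
  set u : S := sS * qS with hu
  set w : S := (1 - u)⁻¹ with hw
  conv_lhs =>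
    rw [atSq_map, hA]
    simp only [map_sub, map_add, map_mul, PowerSeries.map_C, PowerSeries.map_X,
      map_invE, map_atOne, map_atSq_one]
  have h1 : σ m u = sS * qS ^ (m + 1) := by rw [hu]; exact σ_s_q m
  have h2 : σ m w = (1 - sS * qS ^ (m + 1))⁻¹ := by rw [hw, hu]; exact σ_inv_one_sub_q m
  rw [h1, h2]
  unfold inner15
  set c1 := PowerSeries.C (sS * qS ^ (m + 1)) with hc1
  set c2 := PowerSeries.C ((1 - sS * qS ^ (m + 1))⁻¹) with hc2
  set I := (1 - c1 * PowerSeries.X)⁻¹ with hI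
  ring

lemma key_s15 (A : PowerSeries S)
    (hA : A = (1 - PowerSeries.C (sS * qS) * PowerSeries.X)⁻¹
        + PowerSeries.X * PowerSeries.C ((1 - sS * qS)⁻¹) *
            (1 - PowerSeries.C (sS * qS) * PowerSeries.X)⁻¹ * atOne A
        - PowerSeries.C (sS * qS) * PowerSeries.X * PowerSeries.C ((1 - sS * qS)⁻¹) *
            (1 - PowerSeries.C (sS * qS) * PowerSeries.X)⁻¹ * atSq 1 A) :
    ∀ m : ℕ, A = (∑ n ∈ Finset.range m,
        PowerSeries.C ((-sS) ^ n * qS ^ (n * (n + 1) / 2) / pochS (sS * qS) n)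
          * PowerSeries.X ^ n * ((pochXs 1 n)⁻¹ * inner15 n A))
      + PowerSeries.C ((-sS) ^ m * qS ^ (m * (m + 1) / 2) / pochS (sS * qS) m)
          * PowerSeries.X ^ m * ((pochXs 1 m)⁻¹ * atSq m A) := by
  intro m
  induction m with
  | zero => simp [pochS, pochXs, atSq_zero]
  | succ m ih =>
      rw [Finset.sum_range_succ, add_assoc]
      conv_lhs => rw [ih]
      congr 1
      rw [step A hA m, pochXs_inv_succ]
      have hc : PowerSeries.C ((-sS) ^ (m + 1) * qS ^ ((m + 1) * (m + 1 + 1) / 2)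
            / pochS (sS * qS) (m + 1))
          = -(PowerSeries.C ((-sS) ^ m * qS ^ (m * (m + 1) / 2) / pochS (sS * qS) m)
              * PowerSeries.C (sS * qS ^ (m + 1))
              * PowerSeries.C ((1 - sS * qS ^ (m + 1))⁻¹)) := by
        rw [cc_succ, map_mul, map_mul, map_neg]
        ring
      rw [hc]
      ring


/-- If `A(s)` (with coefficients polynomial in `s` and `q`) satisfies
`A(s) = 1/(1-xsq) + (x/((1-sq)(1-xsq)))·A(1) - (xsq/((1-sq)(1-xsq)))·A(sq)`, then
`A(s) = Σ_{n≥0} ((-xs)^n q^{n(n+1)/2}/((sq;q)_n (xsq;q)_n)) ·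
(1/(1-xsq^{n+1}) + (x/((1-sq^{n+1})(1-xsq^{n+1})))·A(1))`,
the sum being taken coefficientwise in `x` (the `n`-th term has `x`-order at least `n`). -/
theorem stmt15 (A : PowerSeries S) (hpoly : PolyCoeffs A)
    (hA : A = (1 - PowerSeries.C (sS * qS) * PowerSeries.X)⁻¹
        + PowerSeries.X * PowerSeries.C ((1 - sS * qS)⁻¹) *
            (1 - PowerSeries.C (sS * qS) * PowerSeries.X)⁻¹ * atOne A
        - PowerSeries.C (sS * qS) * PowerSeries.X * PowerSeries.C ((1 - sS * qS)⁻¹) *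
            (1 - PowerSeries.C (sS * qS) * PowerSeries.X)⁻¹ * atSq 1 A) :
    ∀ N, PowerSeries.coeff N A
      = ∑ n ∈ Finset.range (N + 1),
          ((-sS) ^ n * qS ^ (n * (n + 1) / 2) / pochS (sS * qS) n) *
            PowerSeries.coeff (N - n) ((pochXs 1 n)⁻¹ * inner15 n A) := by
  intro N
  conv_lhs => rw [key_s15 A hA (N + 1)]
  rw [map_add, map_sum]
  have hrem : (PowerSeries.coeff N)
      (PowerSeries.C ((-sS) ^ (N + 1) * qS ^ ((N + 1) * (N + 1 + 1) / 2)
          / pochS (sS * qS) (N + 1))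
        * PowerSeries.X ^ (N + 1) * ((pochXs 1 (N + 1))⁻¹ * atSq (N + 1) A)) = 0 := by
    rw [mul_assoc, PowerSeries.coeff_C_mul, PowerSeries.coeff_X_pow_mul',
      if_neg (by omega), mul_zero]
  rw [hrem, add_zero]
  refine Finset.sum_congr rfl fun n hn => ?_
  have hn' : n ≤ N := by
    have := Finset.mem_range.mp hn
    omega
  rw [mul_assoc, PowerSeries.coeff_C_mul, PowerSeries.coeff_X_pow_mul', if_pos hn']

end FC
end
end
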